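/- arXiv:math/0010258 — 3 statements merged into one kernel-verified Lean document; each statement's English description precedes it below -/
import Mathlib

section
/- Let R be a ring and M a semisimple R-module which is multiplicity-free in the sense that any two simple submodules of M that are isomorphic as R-modules are equal. Then every submodule N of M has exactly one complement: there exists a unique submodule P of M with N ∩ P = 0 and N + P = M. -/
/-- In a multiplicity-free semisimple module, every submodule has exactly one
complement. -/
theorem stmt_2 (R M : Type*) [Ring R] [AddCommGroup M] [Module R M]
    [IsSemisimpleModule R M]
    (hmf : ∀ N P : Submodule R M, IsSimpleModule R N → IsSimpleModule R P →
      Nonempty (N ≃ₗ[R] P) → N = P) :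
    ∀ N : Submodule R M, ∃! P : Submodule R M, IsCompl N P := by
  intro N
  -- key: if P, P' are both complements of N, then P ≤ P'
  have key : ∀ P P' : Submodule R M, IsCompl N P → IsCompl N P' → P ≤ P' := by
    intro P P' hP hP'
    rw [← IsSemisimpleModule.sSup_simples_le P]
    apply sSup_le
    rintro S ⟨hSsimple, hSP⟩
    -- project S into P' along N
    set π : M →ₗ[R] M := P'.subtype.comp (Submodule.projectionOnto P' N hP'.symm)
    have hker : LinearMap.ker π = N := by
      rw [LinearMap.ker_comp, Submodule.ker_subtype, Submodule.comap_bot, Submodule.linearProjOfIsCompl_ker]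
    set f : S →ₗ[R] M := π.comp S.subtype
    have hfinj : Function.Injective f := by
      rw [← LinearMap.ker_eq_bot, LinearMap.ker_comp, hker,
        ← Submodule.disjoint_iff_comap_eq_bot]
      exact (hP.disjoint.mono_right hSP).symm
    have hrange : LinearMap.range f = Submodule.map π S := by
      rw [LinearMap.range_comp, Submodule.range_subtype]
    have hrange' : Submodule.map π S ≤ P' := by
      intro x hx
      obtain ⟨y, -, rfl⟩ := hx
      exact (Submodule.projectionOnto P' N hP'.symm y).2
    have e : S ≃ₗ[R] Submodule.map π S :=
      (LinearEquiv.ofInjective f hfinj).trans (LinearEquiv.ofEq _ _ hrange)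
    have hsimple' : IsSimpleModule R (Submodule.map π S) := IsSimpleModule.congr e.symm
    have := hmf S (Submodule.map π S) hSsimple hsimple' ⟨e⟩
    rw [this]
    exact hrange'
  obtain ⟨P, hP⟩ := exists_isCompl N
  exact ⟨P, hP, fun Q hQ => le_antisymm (key Q P hQ hP) (key P Q hP hQ)⟩
end

section
/- For every j, k ∈ ℕ, every φ ∈ R^j and ψ ∈ R^k, and every d ∈ ℕ with d < |j − k|, the homogeneous component π_d(φ ∘ ψ) vanishes; consequently φ ∘ ψ lies in R^{j+k} ⊕ R^{j+k−1} ⊕ ⋯ ⊕ R^{|j−k|}. -/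
/-- A graded complex vector space `R = ⊕_{d ∈ ℕ} R^d` (encoded by the projections
`π d` onto the graded pieces), equipped with: an associative unital ℂ-bilinear
product `mul` (the specialized star product `∘`) satisfying the filtration bound
`π d (φ ∘ ψ) = 0` for `φ ∈ R^j`, `ψ ∈ R^k`, `d > j + k`; a Hermitian form `B`
(linear in the first argument, conjugate-linear in the second) for which the
grading is orthogonal and which is nondegenerate on each graded piece; and a
conjugate-linear grading-preserving involution `σ` satisfying the adjoint
relation `B (φ ∘ a) b = B a (b ∘ σ φ)`. -/
structure GradedStarAlgebra (R : Type*) [AddCommGroup R] [Module ℂ R] where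
  π : ℕ → Module.End ℂ R
  π_idem : ∀ (d : ℕ) (v : R), π d (π d v) = π d v
  π_orth : ∀ d e : ℕ, d ≠ e → ∀ v : R, π d (π e v) = 0
  π_fin : ∀ v : R, (Function.support fun d => π d v).Finite
  π_sum : ∀ v : R, ∑ᶠ d : ℕ, π d v = v
  mul : R →ₗ[ℂ] R →ₗ[ℂ] R
  one : R
  mul_assoc' : ∀ a b c : R, mul (mul a b) c = mul a (mul b c)
  one_mul' : ∀ a : R, mul one a = a
  mul_one' : ∀ a : R, mul a one = a
  B : R → R → ℂ
  B_add_left : ∀ a a' b : R, B (a + a') b = B a b + B a' b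
  B_smul_left : ∀ (c : ℂ) (a b : R), B (c • a) b = c * B a b
  B_conj : ∀ a b : R, B b a = (starRingEnd ℂ) (B a b)
  B_orth : ∀ j k : ℕ, j ≠ k → ∀ a b : R, π j a = a → π k b = b → B a b = 0
  B_nondeg : ∀ (d : ℕ) (a : R), π d a = a →
    (∀ b : R, π d b = b → B a b = 0) → a = 0
  σ : R → R
  σ_add : ∀ a b : R, σ (a + b) = σ a + σ b
  σ_smul : ∀ (c : ℂ) (a : R), σ (c • a) = (starRingEnd ℂ c) • σ a
  σ_invol : ∀ a : R, σ (σ a) = a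
  σ_grade : ∀ (d : ℕ) (a : R), π d a = a → π d (σ a) = σ a
  filt : ∀ (j k : ℕ) (a b : R), π j a = a → π k b = b →
    ∀ d : ℕ, j + k < d → π d (mul a b) = 0
  adj : ∀ φ a b : R, B (mul φ a) b = B a (mul b (σ φ))


namespace GradedStarAlgebra

variable {R : Type*} [AddCommGroup R] [Module ℂ R] (S : GradedStarAlgebra R)

private lemma B_zero_left (b : R) : S.B 0 b = 0 := by
  have h : S.B 0 b = S.B 0 b + S.B 0 b := by rw [← S.B_add_left, add_zero]
  exact (left_eq_add.mp h)

private lemma B_zero_right (a : R) : S.B a 0 = 0 := by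
  rw [S.B_conj, B_zero_left, map_zero]

/-- The additive map `a ↦ B a b`. -/
private def Bl (b : R) : R →+ ℂ :=
  AddMonoidHom.mk' (fun a => S.B a b) (fun a a' => S.B_add_left a a' b)

private lemma left_proj (m b : R) (d : ℕ) (hb : S.π d b = b) :
    S.B m b = S.B (S.π d m) b := by
  classical
  set s := (S.π_fin m).toFinset with hs
  have hm : m = ∑ e ∈ s, S.π e m := by
    conv_lhs => rw [← S.π_sum m]
    exact finsum_eq_sum_of_support_subset _ (by simp [hs])
  have h1 : S.B m b = ∑ e ∈ s, S.B (S.π e m) b := by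
    conv_lhs => rw [hm]
    exact map_sum (S.Bl b) _ s
  rw [h1]
  refine Finset.sum_eq_single d (fun e _ he => ?_) (fun hd => ?_)
  · exact S.B_orth e d he _ b (S.π_idem e m) hb
  · have : S.π d m = 0 := by
      by_contra h
      exact hd (by simp [hs, Function.mem_support, h])
    rw [this, S.B_zero_left]

private lemma right_proj (a m : R) (d : ℕ) (ha : S.π d a = a) :
    S.B a m = S.B a (S.π d m) := by
  rw [S.B_conj m a, S.B_conj (S.π d m) a, S.left_proj m a d ha]

end GradedStarAlgebra

/-- For `φ ∈ R^j` and `ψ ∈ R^k`, every homogeneous component of `φ ∘ ψ` of degree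
`d < |j - k|` vanishes; consequently `φ ∘ ψ` lies in `R^{j+k} ⊕ ⋯ ⊕ R^{|j-k|}`. -/
theorem stmt_3 (R : Type*) [AddCommGroup R] [Module ℂ R] (S : GradedStarAlgebra R)
    (j k : ℕ) (φ ψ : R) (hφ : S.π j φ = φ) (hψ : S.π k ψ = ψ) :
    (∀ d : ℕ, (d : ℤ) < |(j : ℤ) - (k : ℤ)| → S.π d (S.mul φ ψ) = 0) ∧
    S.mul φ ψ = ∑ d ∈ Finset.Icc (max j k - min j k) (j + k), S.π d (S.mul φ ψ) := by
  set m := S.mul φ ψ with hmdef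
  have key : ∀ d : ℕ, (d : ℤ) < |(j : ℤ) - (k : ℤ)| → S.π d m = 0 := by
    intro d hd
    have hcases : d + j < k ∨ d + k < j := by
      rcases abs_cases ((j : ℤ) - (k : ℤ)) with ⟨he, _⟩ | ⟨he, _⟩ <;>
        rw [he] at hd <;> omega
    refine S.B_nondeg d _ (S.π_idem d m) (fun b hb => ?_)
    rw [← S.left_proj m b d hb]
    have h1 : S.B m b = S.B ψ (S.mul b (S.σ φ)) := S.adj φ ψ b
    have hσφ : S.π j (S.σ φ) = S.σ φ := S.σ_grade j φ hφ
    rcases hcases with hc | hc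
    · have hfil : S.π k (S.mul b (S.σ φ)) = 0 :=
        S.filt d j b (S.σ φ) hb hσφ k (by omega)
      rw [h1, S.right_proj ψ _ k hψ, hfil, S.B_zero_right]
    · have hσb : S.π d (S.σ b) = S.σ b := S.σ_grade d b hb
      have hfil : S.π j (S.mul ψ (S.σ b)) = 0 :=
        S.filt k d ψ (S.σ b) hψ hσb j (by omega)
      have h2 : S.B (S.mul b (S.σ φ)) ψ = S.B (S.σ φ) (S.mul ψ (S.σ b)) :=
        S.adj b (S.σ φ) ψ
      rw [h1, S.B_conj, h2, S.right_proj (S.σ φ) _ j hσφ, hfil, S.B_zero_right,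
        map_zero]
  refine ⟨key, ?_⟩
  have hsub : (Function.support fun d => S.π d m) ⊆
      ↑(Finset.Icc (max j k - min j k) (j + k)) := by
    intro d hd
    simp only [Function.mem_support] at hd
    simp only [Finset.coe_Icc, Set.mem_Icc]
    constructor
    · by_contra h
      push_neg at h
      refine hd (key d ?_)
      rcases abs_cases ((j : ℤ) - (k : ℤ)) with ⟨he, _⟩ | ⟨he, _⟩ <;> rw [he] <;> omega
    · by_contra h
      push_neg at h
      exact hd (S.filt j k φ ψ hφ hψ d h)
  conv_lhs => rw [show m = ∑ᶠ d, S.π d m from (S.π_sum m).symm]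
  exact finsum_eq_sum_of_support_subset _ hsub
end

section
/- Let V be a complex vector space, (F_d)_{d∈ℕ} an increasing sequence of subspaces of V, and λ : V × V → ℂ a symmetric ℂ-bilinear form. Suppose (V_d)_{d∈ℕ} and (W_d)_{d∈ℕ} are two families of subspaces, each splitting the filtration in the sense that the internal direct sum V_0 ⊕ V_1 ⊕ ⋯ ⊕ V_d equals F_d for every d, and likewise W_0 ⊕ ⋯ ⊕ W_d = F_d. Assume λ(V_j, V_k) = 0 and λ(W_j, W_k) = 0 whenever j ≠ k, and that the restriction of λ to each V_d is nondegenerate. Then W_d = V_d for every d. -/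
/-- Orthogonality of the higher pieces to the filtration level. -/
private lemma stmt5_aux_orth (V : Type*) [AddCommGroup V] [Module ℂ V]
    (F : ℕ → Submodule ℂ V)
    (l : V →ₗ[ℂ] V →ₗ[ℂ] ℂ)
    (Vd : ℕ → Submodule ℂ V)
    (hVsum : ∀ d : ℕ, (⨆ i ∈ Finset.range (d + 1), Vd i) = F d)
    (hVorth : ∀ j k : ℕ, j ≠ k → ∀ a ∈ Vd j, ∀ b ∈ Vd k, l a b = 0) :
    (∀ d : ℕ, F (d + 1) = F d ⊔ Vd (d + 1)) ∧ (Vd 0 = F 0) ∧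
    (∀ d j : ℕ, d < j → ∀ a ∈ Vd j, ∀ b ∈ F d, l a b = 0) := by
  have hsucc : ∀ d : ℕ, F (d + 1) = F d ⊔ Vd (d + 1) := by
    intro d
    rw [← hVsum d, ← hVsum (d + 1)]
    rw [Finset.range_add_one (n := d + 1), Finset.iSup_insert]
    exact sup_comm _ _
  have h0 : Vd 0 = F 0 := by
    rw [← hVsum 0]
    simp
  refine ⟨hsucc, h0, ?_⟩
  intro d
  induction d with
  | zero =>
    intro j hj a ha b hb
    rw [← h0] at hb
    exact hVorth j 0 (by omega) a ha b hb
  | succ d ih =>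
    intro j hj a ha b hb
    rw [hsucc d] at hb
    rcases Submodule.mem_sup.mp hb with ⟨y, hy, z, hz, rfl⟩
    rw [map_add, ih j (by omega) a ha y hy, hVorth j (d + 1) (by omega) a ha z hz, add_zero]

/-- Uniqueness of orthogonal splittings: if `(V_d)` and `(W_d)` both split an
increasing filtration `(F_d)` of a complex vector space (`V_0 ⊕ ⋯ ⊕ V_d = F_d`
for every `d`), both families are orthogonal for a symmetric bilinear form `λ`,
and `λ` is nondegenerate on each `V_d`, then `W_d = V_d` for every `d`. -/
theorem stmt_5 (V : Type*) [AddCommGroup V] [Module ℂ V]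
    (F : ℕ → Submodule ℂ V) (hF : Monotone F)
    (l : V →ₗ[ℂ] V →ₗ[ℂ] ℂ) (hsymm : ∀ a b : V, l a b = l b a)
    (Vd Wd : ℕ → Submodule ℂ V)
    (hVind : iSupIndep Vd)
    (hVsum : ∀ d : ℕ, (⨆ i ∈ Finset.range (d + 1), Vd i) = F d)
    (hWind : iSupIndep Wd)
    (hWsum : ∀ d : ℕ, (⨆ i ∈ Finset.range (d + 1), Wd i) = F d)
    (hVorth : ∀ j k : ℕ, j ≠ k → ∀ a ∈ Vd j, ∀ b ∈ Vd k, l a b = 0)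
    (hWorth : ∀ j k : ℕ, j ≠ k → ∀ a ∈ Wd j, ∀ b ∈ Wd k, l a b = 0)
    (hnondeg : ∀ d : ℕ, ∀ a ∈ Vd d, (∀ b ∈ Vd d, l a b = 0) → a = 0) :
    ∀ d : ℕ, Wd d = Vd d := by
  obtain ⟨hVsucc, hV0, hVorthF⟩ := stmt5_aux_orth V F l Vd hVsum hVorth
  obtain ⟨hWsucc, hW0, hWorthF⟩ := stmt5_aux_orth V F l Wd hWsum hWorth
  -- nondegeneracy of l on each F d
  have hnondegF : ∀ d : ℕ, ∀ f ∈ F d, (∀ u ∈ F d, l f u = 0) → f = 0 := by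
    intro d
    induction d with
    | zero =>
      intro f hf h
      rw [← hV0] at hf
      exact hnondeg 0 f hf (fun b hb => h b (hV0 ▸ hb))
    | succ d ih =>
      intro f hf h
      rw [hVsucc d] at hf
      rcases Submodule.mem_sup.mp hf with ⟨y, hy, z, hz, rfl⟩
      have hy0 : y = 0 := by
        apply ih y hy
        intro u hu
        have h1 : l (y + z) u = 0 := h u (hF (Nat.le_succ d) hu)
        have h2 : l z u = 0 := hVorthF d (d + 1) (by omega) z hz u hu
        rw [map_add, LinearMap.add_apply, h2, add_zero] at h1
        exact h1
      subst hy0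
      rw [zero_add] at h ⊢
      apply hnondeg (d + 1) z hz
      intro b hb
      have hbF : b ∈ F (d + 1) := by
        rw [hVsucc d]; exact Submodule.mem_sup_right hb
      exact h b hbF
  -- Vd d ≤ F d, Wd d ≤ F d
  have hVle : ∀ d : ℕ, Vd d ≤ F d := by
    intro d
    rw [← hVsum d]
    exact le_biSup Vd (Finset.self_mem_range_succ d)
  have hWle : ∀ d : ℕ, Wd d ≤ F d := by
    intro d
    rw [← hWsum d]
    exact le_biSup Wd (Finset.self_mem_range_succ d)
  intro d
  cases d with
  | zero => rw [hV0, hW0]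
  | succ d =>
    -- first Wd (d+1) ≤ Vd (d+1)
    have hle : Wd (d + 1) ≤ Vd (d + 1) := by
      intro w hw
      have hwF : w ∈ F (d + 1) := hWle (d + 1) hw
      rw [hVsucc d] at hwF
      rcases Submodule.mem_sup.mp hwF with ⟨y, hy, z, hz, hsum⟩
      have hy0 : y = 0 := by
        apply hnondegF d y hy
        intro u hu
        have h1 : l w u = 0 := hWorthF d (d + 1) (by omega) w hw u hu
        have h2 : l z u = 0 := hVorthF d (d + 1) (by omega) z hz u hu
        rw [← hsum, map_add, LinearMap.add_apply, h2, add_zero] at h1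
        exact h1
      rw [← hsum, hy0, zero_add]
      exact hz
    -- reverse inclusion
    refine le_antisymm hle ?_
    intro v hv
    have hvF : v ∈ F (d + 1) := hVle (d + 1) hv
    rw [hWsucc d] at hvF
    rcases Submodule.mem_sup.mp hvF with ⟨y, hy, z, hz, hsum⟩
    have hzV : z ∈ Vd (d + 1) := hle hz
    have hyV : y ∈ Vd (d + 1) := by
      have : y = v - z := by rw [← hsum]; abel
      rw [this]
      exact Submodule.sub_mem _ hv hzV
    have hy0 : y = 0 := by
      apply hnondeg (d + 1) y hyV
      intro b hb
      rw [hsymm y b]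
      exact hVorthF d (d + 1) (by omega) b hb y hy
    rw [← hsum, hy0, zero_add]
    exact hz
end
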